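/- If T is a ditree with minimum in-degree at least 1 and H is any digraph with minimum in-degree at least 1, then γ_t(T × H) = γ_t(T) · γ_t(H). -/

import Mathlib

open SimpleGraph

variable {V W : Type*}

/-- The closed out-neighborhood of `v` in the digraph with arc relation `A`. -/
def NplusC (A : V → V → Prop) (v : V) : Set V := insert v {u | A v u}

/-- The closed in-neighborhood of `v`. -/
def NminusC (A : V → V → Prop) (v : V) : Set V := insert v {u | A u v}

/-- The open out-neighborhood of `v`. -/
def NplusO (A : V → V → Prop) (v : V) : Set V := {u | A v u}

/-- The open in-neighborhood of `v`. -/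
def NminusO (A : V → V → Prop) (v : V) : Set V := {u | A u v}

/-- `S` is a dominating set: every vertex is in a closed out-neighborhood of a member of `S`. -/
def IsDomSet (A : V → V → Prop) (S : Set V) : Prop := ∀ u, ∃ v ∈ S, u ∈ NplusC A v

/-- The domination number of a digraph. -/
noncomputable def domNum (V : Type*) [Fintype V] (A : V → V → Prop) : ℕ :=
  sInf {n | ∃ S : Set V, IsDomSet A S ∧ S.ncard = n}

/-- `P` is a packing: closed in-neighborhoods of members are pairwise disjoint. -/
def IsPacking (A : V → V → Prop) (P : Set V) : Prop :=
  P.Pairwise fun x y => Disjoint (NminusC A x) (NminusC A y)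

/-- The packing number of a digraph. -/
noncomputable def packNum (V : Type*) [Fintype V] (A : V → V → Prop) : ℕ :=
  sSup {n | ∃ P : Set V, IsPacking A P ∧ P.ncard = n}

/-- `S` is a total dominating set: every vertex has an in-neighbor in `S`. -/
def IsTotalDomSet (A : V → V → Prop) (S : Set V) : Prop := ∀ u, ∃ v ∈ S, A v u

/-- The total domination number of a digraph. -/
noncomputable def totalDomNum (V : Type*) [Fintype V] (A : V → V → Prop) : ℕ :=
  sInf {n | ∃ S : Set V, IsTotalDomSet A S ∧ S.ncard = n}

/-- `P` is an open packing: open in-neighborhoods of members are pairwise disjoint. -/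
def IsOpenPacking (A : V → V → Prop) (P : Set V) : Prop :=
  P.Pairwise fun x y => Disjoint (NminusO A x) (NminusO A y)

/-- The open packing number of a digraph. -/
noncomputable def openPackNum (V : Type*) [Fintype V] (A : V → V → Prop) : ℕ :=
  sSup {n | ∃ P : Set V, IsOpenPacking A P ∧ P.ncard = n}

/-- The underlying (simple) graph of a digraph. -/
def ugr (A : V → V → Prop) : SimpleGraph V := SimpleGraph.fromRel A

/-- A ditree is a digraph whose underlying graph is a tree. -/
def IsDitree (A : V → V → Prop) : Prop := (ugr A).IsTree

/-- Arc relation of the Cartesian product of two digraphs. -/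
def cartArc (A : V → V → Prop) (B : W → W → Prop) : V × W → V × W → Prop :=
  fun p q => (p.1 = q.1 ∧ B p.2 q.2) ∨ (p.2 = q.2 ∧ A p.1 q.1)

/-- Arc relation of the direct product of two digraphs. -/
def dirArc (A : V → V → Prop) (B : W → W → Prop) : V × W → V × W → Prop :=
  fun p q => A p.1 q.1 ∧ B p.2 q.2

/-- The closed in-neighborhood graph of a digraph: distinct vertices are adjacent iff
their closed in-neighborhoods intersect. -/
def Ncg (A : V → V → Prop) : SimpleGraph V :=
  SimpleGraph.fromRel (fun u v => (NminusC A u ∩ NminusC A v).Nonempty)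

/-- The open in-neighborhood graph of a digraph: distinct vertices are adjacent iff
their open in-neighborhoods intersect. -/
def Nog (A : V → V → Prop) : SimpleGraph V :=
  SimpleGraph.fromRel (fun u v => (NminusO A u ∩ NminusO A v).Nonempty)

section AuxProof

private lemma path_length_eq_dist {T : SimpleGraph V} (hT : T.IsTree) {a b : V}
    (q : T.Walk a b) (hq : q.IsPath) : q.length = T.dist a b := by
  classical
  obtain ⟨w, hw⟩ := hT.isConnected.exists_walk_length_eq_dist a b
  have h1 : w.bypass = q := by
    obtain ⟨Q, hQ, hun⟩ := hT.existsUnique_path a b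
    rw [hun _ w.bypass_isPath, hun _ hq]
  refine le_antisymm ?_ (SimpleGraph.dist_le q)
  calc q.length = w.bypass.length := by rw [h1]
    _ ≤ w.length := w.length_bypass_le
    _ = T.dist a b := hw

private lemma tree_parent {T : SimpleGraph V} (hT : T.IsTree) (r : V) {u : V} (hu : u ≠ r) :
    ∃ p, T.Adj p u ∧ T.dist r p + 1 = T.dist r u ∧
      ∀ x, T.Adj x u → x ≠ p → T.dist r x = T.dist r u + 1 := by
  classical
  obtain ⟨Q, hQ, hQun⟩ := hT.existsUnique_path u r
  cases Q with
  | nil => exact absurd rfl hu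
  | @cons _ p _ h q =>
    have hq : q.IsPath := hQ.of_cons
    have hdu : T.dist r u = q.length + 1 := by
      rw [SimpleGraph.dist_comm, ← path_length_eq_dist hT _ hQ]
      simp
    have hdp : T.dist r p = q.length := by
      rw [SimpleGraph.dist_comm, ← path_length_eq_dist hT q hq]
    refine ⟨p, h.symm, by omega, ?_⟩
    intro x hx hxp
    obtain ⟨R, hR, hRun⟩ := hT.existsUnique_path x r
    by_cases hmem : u ∈ R.support
    · have hdrop : (R.dropUntil u hmem).IsPath := hR.dropUntil hmem
      have htake : (R.takeUntil u hmem).IsPath := hR.takeUntil hmem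
      have e1 : R.dropUntil u hmem = SimpleGraph.Walk.cons h q := by
        rw [hQun _ hdrop, hQun _ hQ]
      have ht1 : (R.takeUntil u hmem).length = 1 := by
        obtain ⟨P1, hP1, hP1un⟩ := hT.existsUnique_path x u
        have e2 : R.takeUntil u hmem = P1 := hP1un _ htake
        have e3 : (SimpleGraph.Path.singleton hx).1 = P1 :=
          hP1un _ (SimpleGraph.Path.singleton hx).2
        rw [e2, ← e3]
        rfl
      have hlen : R.length = (R.takeUntil u hmem).length + (R.dropUntil u hmem).length := by
        conv_lhs => rw [← R.take_spec hmem]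
        rw [SimpleGraph.Walk.length_append]
      rw [SimpleGraph.dist_comm, ← path_length_eq_dist hT R hR, hlen, ht1, e1, hdu]
      simp
      omega
    · have hW : (SimpleGraph.Walk.cons hx.symm R).IsPath := hR.cons hmem
      have e : SimpleGraph.Walk.cons hx.symm R = SimpleGraph.Walk.cons h q := by
        rw [hQun _ hW, hQun _ hQ]
      have : x = p := by
        have h2 := congrArg (fun w => SimpleGraph.Walk.getVert w 1) e
        simpa using h2
      exact absurd this hxp

private lemma tree_key [Fintype V] (A : V → V → Prop)
    (hirr : ∀ v, ¬ A v v) (hT : IsDitree A) (hdA : ∀ v, ∃ u, A u v) :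
    ∃ S P : Set V, IsTotalDomSet A S ∧ IsOpenPacking A P ∧ S.ncard ≤ P.ncard := by
  classical
  set T : SimpleGraph V := ugr A with hTdef
  have hAdj : ∀ {x y : V}, A x y → T.Adj x y := by
    intro x y hxy
    have hne : x ≠ y := by rintro rfl; exact hirr x hxy
    rw [hTdef, ugr]
    exact (SimpleGraph.fromRel_adj A x y).mpr ⟨hne, Or.inl hxy⟩
  have hT2 : T.IsTree := hT
  have hconn : T.Connected := hT2.isConnected
  have hNE : Nonempty V := hconn.nonempty
  obtain ⟨r⟩ := hNE
  have hsym : Symmetric fun x y : V => Disjoint (NminusO A x) (NminusO A y) :=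
    fun x y h => h.symm
  have aux : ∀ n : ℕ, ∀ U : Set V, U.ncard ≤ n →
      ∃ S P : Set V, P ⊆ U ∧ IsOpenPacking A P ∧ (∀ u ∈ U, ∃ s ∈ S, A s u) ∧
        S.ncard ≤ P.ncard := by
    intro n
    induction n with
    | zero =>
      intro U hU
      have hUe : U = ∅ := (Set.ncard_eq_zero (Set.toFinite U)).mp (Nat.le_zero.mp hU)
      subst hUe
      exact ⟨∅, ∅, Set.Subset.rfl, Set.pairwise_empty _, by simp, le_rfl⟩
    | succ n IH =>
      intro U hU
      rcases U.eq_empty_or_nonempty with rfl | hne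
      · exact ⟨∅, ∅, Set.Subset.rfl, Set.pairwise_empty _, by simp, le_rfl⟩
      obtain ⟨u, huU, hmax⟩ : ∃ u ∈ U, ∀ v ∈ U, T.dist r v ≤ T.dist r u := by
        obtain ⟨u, hu1, hu2⟩ := Finset.exists_max_image (Set.toFinite U).toFinset (T.dist r)
          ((Set.Finite.toFinset_nonempty _).mpr hne)
        exact ⟨u, by simpa using hu1, fun v hv => hu2 v (by simpa using hv)⟩
      by_cases hur : u = r
      · -- U = {u}
        have hUu : ∀ v ∈ U, v = u := by
          intro v hv
          have h0 : T.dist r v = 0 := by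
            have h1 := hmax v hv
            have h2 : T.dist r u = 0 := by rw [hur]; exact SimpleGraph.dist_self
            omega
          have := (hconn.dist_eq_zero_iff (u := r) (v := v)).mp h0
          rw [← this, hur]
        obtain ⟨x, hx⟩ := hdA u
        refine ⟨{x}, {u}, by simpa using huU, Set.pairwise_singleton _ _, ?_, by simp⟩
        intro v hv
        rw [hUu v hv]
        exact ⟨x, rfl, hx⟩
      · obtain ⟨p, hpadj, hdp, hother⟩ := tree_parent hT2 r hur
        have claimP : ∀ v ∈ U, v ≠ u → ∀ x, A x u → A x v → x = p := by
          intro v hv hvu x hxu hxv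
          by_contra hxp
          have hadjxu : T.Adj x u := hAdj hxu
          have hdx : T.dist r x = T.dist r u + 1 := hother x hadjxu hxp
          have hxr : x ≠ r := by
            intro hxe
            rw [hxe] at hdx
            simp [SimpleGraph.dist_self] at hdx
          obtain ⟨px, hpxadj, hdpx, hotherx⟩ := tree_parent hT2 r hxr
          have hupx : u = px := by
            by_contra hne2
            have := hotherx u hadjxu.symm hne2
            omega
          have hadjxv : T.Adj x v := hAdj hxv
          have hvne : v ≠ px := fun e => hvu (e.trans hupx.symm)
          have h3 : T.dist r v = T.dist r x + 1 := hotherx v hadjxv.symm hvne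
          have h4 : T.dist r v ≤ T.dist r u := hmax v hv
          omega
        set U' : Set V := {v ∈ U | v ≠ u ∧ ¬ ∃ x, A x u ∧ A x v} with hU'def
        have hU'sub : U' ⊆ U := fun v hv => hv.1
        have hu_not : u ∉ U' := fun h => h.2.1 rfl
        have hss : U' ⊂ U := (Set.ssubset_iff_of_subset hU'sub).mpr ⟨u, huU, hu_not⟩
        have hcard' : U'.ncard ≤ n := by
          have := Set.ncard_lt_ncard hss (Set.toFinite U)
          omega
        obtain ⟨S', P', hP'sub, hP'pack, hdom', hle'⟩ := IH U' hcard'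
        have huP' : u ∉ P' := fun h => hu_not (hP'sub h)
        have hPcard : (insert u P').ncard = P'.ncard + 1 :=
          Set.ncard_insert_of_notMem huP' (Set.toFinite P')
        have hpackP : IsOpenPacking A (insert u P') := by
          haveI : Std.Symm (fun x y : V => Disjoint (NminusO A x) (NminusO A y)) :=
            ⟨fun a b h => hsym h⟩
          rw [IsOpenPacking, Set.pairwise_insert_of_symm]
          refine ⟨hP'pack, ?_⟩
          intro v hv hne2
          have hv' := hP'sub hv
          rw [Set.disjoint_left]
          intro x hx1 hx2
          exact hv'.2.2 ⟨x, hx1, hx2⟩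
        have hPsub : insert u P' ⊆ U := Set.insert_subset huU (hP'sub.trans hU'sub)
        by_cases hpu : A p u
        · refine ⟨insert p S', insert u P', hPsub, hpackP, ?_, ?_⟩
          · intro v hv
            by_cases hvu : v = u
            · exact ⟨p, Set.mem_insert _ _, hvu ▸ hpu⟩
            by_cases hvU' : v ∈ U'
            · obtain ⟨s, hs, hsv⟩ := hdom' v hvU'
              exact ⟨s, Set.mem_insert_of_mem _ hs, hsv⟩
            · have : ∃ x, A x u ∧ A x v := by
                by_contra hcon
                exact hvU' ⟨hv, hvu, hcon⟩
              obtain ⟨x, hxu, hxv⟩ := this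
              have := claimP v hv hvu x hxu hxv
              exact ⟨p, Set.mem_insert _ _, this ▸ hxv⟩
          · calc (insert p S').ncard ≤ S'.ncard + 1 := Set.ncard_insert_le _ _
              _ ≤ P'.ncard + 1 := by omega
              _ = (insert u P').ncard := hPcard.symm
        · obtain ⟨x0, hx0⟩ := hdA u
          refine ⟨insert x0 S', insert u P', hPsub, hpackP, ?_, ?_⟩
          · intro v hv
            by_cases hvu : v = u
            · exact ⟨x0, Set.mem_insert _ _, hvu ▸ hx0⟩
            by_cases hvU' : v ∈ U'
            · obtain ⟨s, hs, hsv⟩ := hdom' v hvU'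
              exact ⟨s, Set.mem_insert_of_mem _ hs, hsv⟩
            · exfalso
              have : ∃ x, A x u ∧ A x v := by
                by_contra hcon
                exact hvU' ⟨hv, hvu, hcon⟩
              obtain ⟨x, hxu, hxv⟩ := this
              exact hpu ((claimP v hv hvu x hxu hxv) ▸ hxu)
          · calc (insert x0 S').ncard ≤ S'.ncard + 1 := Set.ncard_insert_le _ _
              _ ≤ P'.ncard + 1 := by omega
              _ = (insert u P').ncard := hPcard.symm
  obtain ⟨S, P, _, hpack, hdom, hle⟩ := aux (Set.univ : Set V).ncard Set.univ le_rfl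
  exact ⟨S, P, fun v => hdom v (Set.mem_univ v), hpack, hle⟩


private lemma totalDomNum_le' [Fintype V] (A : V → V → Prop) (S : Set V)
    (h : IsTotalDomSet A S) : totalDomNum V A ≤ S.ncard :=
  Nat.sInf_le ⟨S, h, rfl⟩

private lemma exists_min_tds [Fintype V] (A : V → V → Prop) (hdA : ∀ v, ∃ u, A u v) :
    ∃ S : Set V, IsTotalDomSet A S ∧ S.ncard = totalDomNum V A := by
  have hne : {n | ∃ S : Set V, IsTotalDomSet A S ∧ S.ncard = n}.Nonempty := by
    refine ⟨(Set.univ : Set V).ncard, Set.univ, ?_, rfl⟩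
    exact fun u => (hdA u).imp fun v hv => ⟨Set.mem_univ v, hv⟩
  exact Nat.sInf_mem hne

end AuxProof

theorem stmt4 {V W : Type*} [Fintype V] [Fintype W]
    (A : V → V → Prop) (B : W → W → Prop)
    (hirrA : ∀ v, ¬ A v v) (hirrB : ∀ w, ¬ B w w)
    (hT : IsDitree A)
    (hdA : ∀ v : V, ∃ u, A u v) (hdB : ∀ w : W, ∃ u, B u w) :
    totalDomNum (V × W) (dirArc A B) = totalDomNum V A * totalDomNum W B := by
  classical
  have hdAB : ∀ q : V × W, ∃ p, dirArc A B p q := by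
    rintro ⟨v, w⟩
    obtain ⟨a, ha⟩ := hdA v
    obtain ⟨b, hb⟩ := hdB w
    exact ⟨(a, b), ha, hb⟩
  -- upper bound
  obtain ⟨SA, hSA, hSAc⟩ := exists_min_tds A hdA
  obtain ⟨SB, hSB, hSBc⟩ := exists_min_tds B hdB
  have hub : totalDomNum (V × W) (dirArc A B) ≤ totalDomNum V A * totalDomNum W B := by
    have hprod : IsTotalDomSet (dirArc A B) (SA ×ˢ SB) := by
      rintro ⟨v, w⟩
      obtain ⟨a, haS, hav⟩ := hSA v
      obtain ⟨b, hbS, hbw⟩ := hSB w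
      exact ⟨(a, b), Set.mk_mem_prod haS hbS, hav, hbw⟩
    have hcard : (SA ×ˢ SB).ncard = SA.ncard * SB.ncard := by
      rw [Set.ncard_eq_toFinset_card', Set.ncard_eq_toFinset_card', Set.ncard_eq_toFinset_card',
        Set.toFinset_prod, Finset.card_product]
    calc totalDomNum (V × W) (dirArc A B) ≤ (SA ×ˢ SB).ncard := totalDomNum_le' _ _ hprod
      _ = totalDomNum V A * totalDomNum W B := by rw [hcard, hSAc, hSBc]
  -- lower bound
  obtain ⟨Sstar, hSstar, hSstarc⟩ := exists_min_tds (dirArc A B) hdAB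
  obtain ⟨Skey, P, hSkey, hPpack, hkeyle⟩ := tree_key A hirrA hT hdA
  have hA_le_P : totalDomNum V A ≤ P.ncard :=
    le_trans (totalDomNum_le' _ _ hSkey) hkeyle
  set Q : V → Set (V × W) := fun p => {q ∈ Sstar | A q.1 p} with hQdef
  have hQle : ∀ p : V, totalDomNum W B ≤ (Q p).ncard := by
    intro p
    have himg : IsTotalDomSet B (Prod.snd '' Q p) := by
      intro w
      obtain ⟨q, hqS, hq1, hq2⟩ := hSstar (p, w)
      exact ⟨q.2, ⟨q, ⟨hqS, hq1⟩, rfl⟩, hq2⟩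
    calc totalDomNum W B ≤ (Prod.snd '' Q p).ncard := totalDomNum_le' _ _ himg
      _ ≤ (Q p).ncard := Set.ncard_image_le (Set.toFinite _)
  have hQdisj : ∀ p ∈ P, ∀ p' ∈ P, p ≠ p' → Disjoint (Q p) (Q p') := by
    intro p hp p' hp' hne
    have hd := hPpack hp hp' hne
    rw [Set.disjoint_left]
    rintro q ⟨hqS, hq1⟩ ⟨hqS', hq1'⟩
    exact (Set.disjoint_left.mp hd) hq1 hq1'
  have hlb : P.ncard * totalDomNum W B ≤ Sstar.ncard := by
    set Pf : Finset V := (Set.toFinite P).toFinset with hPf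
    set Qf : V → Finset (V × W) := fun p => (Set.toFinite (Q p)).toFinset with hQf
    have h1 : Pf.card * totalDomNum W B ≤ ∑ p ∈ Pf, (Qf p).card := by
      have := Finset.card_nsmul_le_sum Pf (fun p => (Qf p).card) (totalDomNum W B)
        (fun p _ =>
          le_trans (hQle p) (Set.ncard_eq_toFinset_card (Q p) (Set.toFinite _)).le)
      simpa [smul_eq_mul] using this
    have h2 : ∑ p ∈ Pf, (Qf p).card = (Pf.biUnion Qf).card := by
      rw [Finset.card_biUnion]
      intro p hp p' hp' hne
      show Disjoint (Qf p) (Qf p')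
      rw [hQf, Finset.disjoint_left]
      intro q hq hq'
      have := Set.disjoint_left.mp
        (hQdisj p (by simpa [hPf] using hp) p' (by simpa [hPf] using hp') hne)
      exact this (by simp [hQf] at hq; exact hq) (by simp [hQf] at hq'; exact hq')
    have h3 : (Pf.biUnion Qf).card ≤ Sstar.ncard := by
      rw [Set.ncard_eq_toFinset_card' Sstar]
      apply Finset.card_le_card
      intro q hq
      simp only [Finset.mem_biUnion] at hq
      obtain ⟨p, _, hq⟩ := hq
      have : q ∈ Q p := by simp [hQf] at hq; exact hq
      simpa using this.1
    have hPcard : Pf.card = P.ncard := by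
      rw [hPf, Set.ncard_eq_toFinset_card]
    rw [hPcard] at h1
    omega
  have hlb2 : totalDomNum V A * totalDomNum W B ≤ totalDomNum (V × W) (dirArc A B) := by
    calc totalDomNum V A * totalDomNum W B ≤ P.ncard * totalDomNum W B :=
        Nat.mul_le_mul_right _ hA_le_P
      _ ≤ Sstar.ncard := hlb
      _ = totalDomNum (V × W) (dirArc A B) := hSstarc
  omega
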